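/- arXiv:math/9807121 — 2 statements merged into one kernel-verified Lean document; each statement's English description precedes it below -/
import Mathlib

section
/- A matrix $A \in \mathbb{C}^{n \times n}$ is an irreducible Hermitian positive semidefinite matrix all of whose nonzero entries have modulus $1$ if and only if there exists a unitary diagonal matrix $D$ (a diagonal matrix all of whose diagonal entries have modulus $1$) such that $D^{-1} A D$ is the $n \times n$ all-$1$'s matrix. -/
open scoped ComplexOrder Matrix

open Matrix Complex

private lemma expand3' {n : ℕ} (A : Matrix (Fin n) (Fin n) ℂ) (i j k : Fin n) (a b c : ℂ) :
    star (Pi.single i a + Pi.single j b + Pi.single k c) ⬝ᵥ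
      (A *ᵥ (Pi.single i a + Pi.single j b + Pi.single k c)) =
    starRingEnd ℂ a * a * A i i + starRingEnd ℂ a * b * A i j + starRingEnd ℂ a * c * A i k
    + starRingEnd ℂ b * a * A j i + starRingEnd ℂ b * b * A j j + starRingEnd ℂ b * c * A j k
    + starRingEnd ℂ c * a * A k i + starRingEnd ℂ c * b * A k j + starRingEnd ℂ c * c * A k k := by
  simp only [star_add, ← Pi.single_star, mulVec_add, mulVec_single, dotProduct_add, add_dotProduct,
    single_dotProduct, Complex.star_def, Pi.smul_apply, Matrix.col_apply, op_smul_eq_mul]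
  ring

-- nonneg complex with abs 1 equals 1
private lemma nonneg_abs_one {z : ℂ} (h0 : 0 ≤ z) (h1 : ‖z‖ = 1) : z = 1 := by
  obtain ⟨hre, him⟩ := Complex.le_def.mp h0
  simp only [Complex.zero_re, Complex.zero_im] at hre him
  have habs : ‖z‖ = z.re := by
    rw [Complex.norm_def, Complex.normSq_apply, ← him, mul_zero, add_zero, Real.sqrt_mul_self hre]
  apply Complex.ext <;> simp [← him, ← habs, h1]

/-- A matrix is an irreducible Hermitian positive semidefinite matrix with all nonzero
entries of modulus `1` iff it is unitarily diagonally similar to the all-`1`'s matrix.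
Irreducibility is stated as strong connectivity of the digraph with an edge `i → j`
whenever `A i j ≠ 0`. -/
theorem stmt7 (n : ℕ) (A : Matrix (Fin n) (Fin n) ℂ) :
    (A.PosSemidef ∧ (∀ i j, A i j ≠ 0 → ‖A i j‖ = 1) ∧
      ∀ i j : Fin n, Relation.TransGen (fun a b => A a b ≠ 0) i j) ↔
    ∃ d : Fin n → ℂ, (∀ i, ‖d i‖ = 1) ∧
      (Matrix.diagonal d)⁻¹ * A * Matrix.diagonal d = Matrix.of fun _ _ => (1 : ℂ) := by
  obtain _ | m := n
  · constructor
    · rintro -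
      exact ⟨fun _ => 1, fun i => i.elim0, by ext i j; exact i.elim0⟩
    · rintro -
      refine ⟨Matrix.PosSemidef.of_dotProduct_mulVec_nonneg (by ext i j; exact i.elim0) fun x => by simp [dotProduct],
        fun i => i.elim0, fun i => i.elim0⟩
  constructor
  · rintro ⟨hpsd, habs, hconn⟩
    have herm : ∀ i j, A j i = starRingEnd ℂ (A i j) := fun i j => by
      have := congrFun (congrFun hpsd.1 j) i
      simpa [Matrix.conjTranspose_apply] using this.symm
    -- diagonal entries are all 1
    have hdnn : ∀ i, 0 ≤ A i i := fun i => by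
      have h := hpsd.dotProduct_mulVec_nonneg (Pi.single i 1)
      simpa [← Pi.single_star, mulVec_single, single_dotProduct] using h
    have hle1 : ∀ i, (A i i).re ≤ 1 := by
      intro i
      by_cases h : A i i = 0
      · simp [h]
      · calc (A i i).re ≤ ‖A i i‖ := Complex.re_le_norm _
          _ = 1 := habs i i h
    have hdiag : ∀ i, A i i = 1 := by
      intro i
      have hne : A i i ≠ 0 := by
        obtain ⟨k, hki⟩ : ∃ k, A k i ≠ 0 := by
          cases hconn i i with
          | single h => exact ⟨i, h⟩
          | tail _ h => exact ⟨_, h⟩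
        intro h0
        set s := A k i with hs
        have hss : starRingEnd ℂ s * s = 1 := by
          rw [mul_comm, Complex.mul_conj, Complex.normSq_eq_norm_sq, habs k i hki]
          norm_num
        have h := hpsd.dotProduct_mulVec_nonneg (Pi.single k 1 + Pi.single i (-(starRingEnd ℂ s)) + Pi.single i 0)
        rw [expand3' A k i i] at h
        have heq : starRingEnd ℂ 1 * 1 * A k k
            + starRingEnd ℂ 1 * (-(starRingEnd ℂ s)) * A k i
            + starRingEnd ℂ 1 * 0 * A k i
            + starRingEnd ℂ (-(starRingEnd ℂ s)) * 1 * A i k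
            + starRingEnd ℂ (-(starRingEnd ℂ s)) * (-(starRingEnd ℂ s)) * A i i
            + starRingEnd ℂ (-(starRingEnd ℂ s)) * 0 * A i i
            + starRingEnd ℂ 0 * 1 * A i k
            + starRingEnd ℂ 0 * (-(starRingEnd ℂ s)) * A i i
            + starRingEnd ℂ 0 * 0 * A i i = A k k - 2 := by
          rw [herm k i, ← hs, h0]
          simp only [_root_.map_one, _root_.map_zero, map_neg, Complex.conj_conj]
          linear_combination (-2 : ℂ) * hss
        rw [heq] at h
        obtain ⟨hre, -⟩ := Complex.le_def.mp h
        simp only [Complex.zero_re, Complex.sub_re] at hre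
        have := hle1 k
        norm_num at hre
        linarith
      exact nonneg_abs_one (hdnn i) (habs i i hne)
    -- multiplicativity
    have hmul : ∀ i j k, A i j ≠ 0 → A i k = A i j * A j k := by
      intro i j k hij
      set p := A i j with hp
      set q := A j k with hq
      set r := A i k with hr
      have hpp : starRingEnd ℂ p * p = 1 := by
        rw [mul_comm, Complex.mul_conj, Complex.normSq_eq_norm_sq, habs i j hij]
        norm_num
      have h := hpsd.dotProduct_mulVec_nonneg (Pi.single i 1 + Pi.single j (-(starRingEnd ℂ p))
        + Pi.single k (-(starRingEnd ℂ r - starRingEnd ℂ p * starRingEnd ℂ q)))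
      rw [expand3' A i j k] at h
      have heq : starRingEnd ℂ 1 * 1 * A i i
          + starRingEnd ℂ 1 * (-(starRingEnd ℂ p)) * A i j
          + starRingEnd ℂ 1 * (-(starRingEnd ℂ r - starRingEnd ℂ p * starRingEnd ℂ q)) * A i k
          + starRingEnd ℂ (-(starRingEnd ℂ p)) * 1 * A j i
          + starRingEnd ℂ (-(starRingEnd ℂ p)) * (-(starRingEnd ℂ p)) * A j j
          + starRingEnd ℂ (-(starRingEnd ℂ p))
            * (-(starRingEnd ℂ r - starRingEnd ℂ p * starRingEnd ℂ q)) * A j k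
          + starRingEnd ℂ (-(starRingEnd ℂ r - starRingEnd ℂ p * starRingEnd ℂ q)) * 1 * A k i
          + starRingEnd ℂ (-(starRingEnd ℂ r - starRingEnd ℂ p * starRingEnd ℂ q))
            * (-(starRingEnd ℂ p)) * A k j
          + starRingEnd ℂ (-(starRingEnd ℂ r - starRingEnd ℂ p * starRingEnd ℂ q))
            * (-(starRingEnd ℂ r - starRingEnd ℂ p * starRingEnd ℂ q)) * A k k
          = -((r - p * q) * starRingEnd ℂ (r - p * q)) := by
        rw [herm i j, herm i k, herm j k, ← hp, ← hq, ← hr, hdiag i, hdiag j, hdiag k]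
        simp only [_root_.map_one, map_neg, map_sub, _root_.map_mul, Complex.conj_conj]
        linear_combination (-1 : ℂ) * hpp
      rw [heq, Complex.mul_conj] at h
      obtain ⟨hre, -⟩ := Complex.le_def.mp h
      simp only [Complex.zero_re, Complex.neg_re, Complex.ofReal_re] at hre
      have : Complex.normSq (r - p * q) = 0 :=
        le_antisymm (by linarith) (Complex.normSq_nonneg _)
      have := Complex.normSq_eq_zero.mp this
      exact sub_eq_zero.mp this
    -- all entries nonzero
    have hne : ∀ i j, A i j ≠ 0 := by
      have htrans : Transitive (fun a b : Fin (m + 1) => A a b ≠ 0) := by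
        intro a b c hab hbc
        rw [hmul a b c hab]
        exact mul_ne_zero hab hbc
      intro i j
      have := hconn i j
      rwa [@Relation.transGen_eq_self _ _ ⟨fun a b c => @htrans a b c⟩] at this
    -- construct d
    refine ⟨fun i => A i 0, fun i => habs i 0 (hne i 0), ?_⟩
    have hDinv : (Matrix.diagonal fun i => A i 0)⁻¹
        = Matrix.diagonal fun i => (A i 0)⁻¹ := by
      apply Matrix.inv_eq_left_inv
      rw [Matrix.diagonal_mul_diagonal]
      convert Matrix.diagonal_one with i
      exact inv_mul_cancel₀ (hne i 0)
    ext i j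
    rw [hDinv]
    simp only [Matrix.mul_diagonal, Matrix.diagonal_mul, Matrix.of_apply]
    rw [hmul i 0 j (hne i 0), herm j 0]
    have h1 : starRingEnd ℂ (A j 0) * A j 0 = 1 := by
      rw [mul_comm, Complex.mul_conj, Complex.normSq_eq_norm_sq, habs j 0 (hne j 0)]
      norm_num
    field_simp [hne i 0]
    linear_combination h1
  · rintro ⟨d, hd, heq⟩
    have hdne : ∀ i, d i ≠ 0 := by
      intro i h
      have := hd i
      rw [h, norm_zero] at this
      exact absurd this (by norm_num)
    have hDinv : (Matrix.diagonal d)⁻¹ = Matrix.diagonal fun i => (d i)⁻¹ := by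
      apply Matrix.inv_eq_left_inv
      rw [Matrix.diagonal_mul_diagonal]
      convert Matrix.diagonal_one with i
      exact inv_mul_cancel₀ (hdne i)
    have hA : ∀ i j, A i j = d i * starRingEnd ℂ (d j) := by
      intro i j
      have h := congrFun (congrFun heq i) j
      rw [hDinv] at h
      simp only [Matrix.mul_diagonal, Matrix.diagonal_mul, Matrix.of_apply] at h
      have hc : (d j)⁻¹ = starRingEnd ℂ (d j) :=
        Complex.inv_eq_conj (by rw [hd j])
      rw [← hc]
      field_simp [hdne i, hdne j] at h ⊢
      linear_combination h
    have habs1 : ∀ i j, ‖A i j‖ = 1 := by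
      intro i j
      rw [hA, norm_mul, Complex.norm_conj, hd, hd, mul_one]
    have hne : ∀ i j, A i j ≠ 0 := by
      intro i j h
      have := habs1 i j
      rw [h, norm_zero] at this
      exact absurd this (by norm_num)
    refine ⟨Matrix.PosSemidef.of_dotProduct_mulVec_nonneg ?_ ?_, fun i j _ => habs1 i j, fun i j => .single (hne i j)⟩
    · ext i j
      simp only [Matrix.conjTranspose_apply, hA, RCLike.star_def, _root_.map_mul,
        Complex.conj_conj]
      ring
    · intro x
      have key : star x ⬝ᵥ A *ᵥ x
          = star (∑ j, starRingEnd ℂ (d j) * x j) * (∑ j, starRingEnd ℂ (d j) * x j) := by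
        have hstar : star (∑ j, starRingEnd ℂ (d j) * x j)
            = ∑ j, starRingEnd ℂ (x j) * d j := by
          rw [star_sum]
          refine Finset.sum_congr rfl fun j _ => ?_
          simp [Complex.star_def, mul_comm]
        rw [hstar, Finset.sum_mul_sum]
        simp only [dotProduct, Matrix.mulVec, dotProduct, Pi.star_apply]
        refine Finset.sum_congr rfl fun i _ => ?_
        rw [Finset.mul_sum]
        refine Finset.sum_congr rfl fun j _ => ?_
        simp only [hA, Complex.star_def]
        ring
      rw [key]
      exact star_mul_self_nonneg _
end

section
/- Let $A \in \mathbb{C}^{n \times n}$ be an irreducible Hermitian positive semidefinite matrix all of whose nonzero entries have modulus $1$. Then every entry of $A$ is nonzero; in particular no diagonal entry of $A$ is zero. -/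
open scoped ComplexOrder Matrix

lemma myDetNonneg {m : Type*} [Fintype m] [DecidableEq m] {M : Matrix m m ℂ}
    (hM : M.PosSemidef) : 0 ≤ M.det := by
  rw [hM.isHermitian.det_eq_prod_eigenvalues, ← RCLike.ofReal_prod]
  exact Complex.zero_le_real.mpr (Finset.prod_nonneg fun i _ => hM.eigenvalues_nonneg i)

/-- An irreducible Hermitian positive semidefinite matrix whose nonzero entries all
have modulus `1` has no zero entries at all (in particular no zero diagonal entries).
Irreducibility is stated as strong connectivity of the digraph with an edge `i → j`
whenever `A i j ≠ 0`. -/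
theorem stmt10 (n : ℕ) (A : Matrix (Fin n) (Fin n) ℂ) (hA : A.PosSemidef)
    (h : ∀ i j, A i j ≠ 0 → ‖A i j‖ = 1)
    (hirr : ∀ i j : Fin n, Relation.TransGen (fun a b => A a b ≠ 0) i j) :
    ∀ i j, A i j ≠ 0 := by
  have herm : ∀ i j, A j i = (starRingEnd ℂ) (A i j) := fun i j => (hA.1.apply j i).symm
  have hdiag : ∀ i, A i i = 1 := by
    intro i
    have h0 : A i i ≠ 0 := by
      intro h0
      obtain ⟨b, hb, -⟩ := Relation.TransGen.head'_iff.mp (hirr i i)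
      have hdet := myDetNonneg (hA.submatrix ![i, b])
      rw [Matrix.det_fin_two] at hdet
      simp only [Matrix.submatrix_apply, Matrix.cons_val_zero, Matrix.cons_val_one,
        Matrix.head_cons, h0, zero_mul, zero_sub, herm i b] at hdet
      have hre := (Complex.le_def.mp hdet).1
      rw [Complex.mul_conj'] at hre
      simp only [Complex.neg_re, ← Complex.ofReal_pow, Complex.ofReal_re, Complex.zero_re] at hre
      have hpos : 0 < ‖A i b‖ := norm_pos_iff.mpr hb
      nlinarith
    have h1 := h i i h0
    have h2 : 0 ≤ A i i := by
      exact hA.diag_nonneg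
    rw [Complex.le_def] at h2
    have hre : (A i i).re = 1 := by
      rw [← h1, Complex.norm_def, Complex.normSq_apply, ← h2.2]
      simpa using (Real.sqrt_mul_self h2.1).symm
    exact Complex.ext hre h2.2.symm
  have htrans : Transitive (fun a b : Fin n => A a b ≠ 0) := by
    intro i j k hij hjk
    intro hik
    have hdet := myDetNonneg (hA.submatrix ![i, j, k])
    rw [Matrix.det_fin_three] at hdet
    simp only [Matrix.submatrix_apply, Matrix.cons_val_zero, Matrix.cons_val_one,
      Matrix.head_cons, Matrix.cons_val_two, Matrix.tail_cons, hdiag, hik,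
      herm i j, herm j k, herm i k, map_zero] at hdet
    have h1 := h i j hij
    have h2 := h j k hjk
    rw [show (1:ℂ)*1*1 - 1 * A j k * (starRingEnd ℂ) (A j k)
        - A i j * (starRingEnd ℂ) (A i j) * 1 + A i j * A j k * 0
        + 0 * (starRingEnd ℂ) (A i j) * (starRingEnd ℂ) (A j k) - 0*1*0
        = 1 - A j k * (starRingEnd ℂ) (A j k) - A i j * (starRingEnd ℂ) (A i j) from by ring,
      Complex.mul_conj', Complex.mul_conj'] at hdet
    have hre := (Complex.le_def.mp hdet).1
    simp only [Complex.sub_re, Complex.one_re, ← Complex.ofReal_pow, Complex.ofReal_re,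
      Complex.zero_re, h1, h2] at hre
    norm_num at hre
  intro i j
  have := hirr i j
  rwa [@Relation.transGen_eq_self _ (fun a b : Fin n => A a b ≠ 0) ⟨fun _ _ _ => @htrans _ _ _⟩] at this
end
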